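/- Let R = ⨁_{i∈Z} R_i and S = ⨁_{i∈Z} S_i be Z-graded k-algebras and a ≥ 1. The a-Segre product, defined as ⨁_{i∈Z} R_i ⊗_k M_i where M_i is the a×a matrix of spaces with (p,q)-entry S_{i+p−q} (0 ≤ p,q ≤ a−1), is an associative unital graded k-algebra under the natural matrix-and-tensor multiplication, and for a = 1 it coincides with the usual Segre product ⨁_i R_i ⊗_k S_i. -/

import Mathlib

/-!
# Statement 10

Let `R = ⨁_{i∈ℤ} R_i` and `S = ⨁_{i∈ℤ} S_i` be ℤ-graded `k`-algebras and `a ≥ 1`.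
The `a`-Segre product `⨁_{i∈ℤ} R_i ⊗_k M_i`, where `M_i` is the `a×a` matrix of spaces with
`(p,q)`-entry `S_{i+p−q}`, is an associative unital graded `k`-algebra under the natural
matrix-and-tensor multiplication, and for `a = 1` it coincides with the usual Segre product
`⨁_i R_i ⊗_k S_i`.

The graded algebras are encoded internally: `R`, `S` are `k`-algebras `A`, `B` with gradings
`𝒜`, `ℬ` by `k`-submodules (`GradedRing`).  The `a`-Segre product is realised as the family
of graded pieces `𝒜_i ⊗ M_i` inside the associative unital `k`-algebra
`A ⊗_k Matrix (Fin a) (Fin a) B`: the claims are that the pieces contain `1`, are closed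
under multiplication (hence form an associative unital graded subalgebra, with the natural
matrix-and-tensor multiplication), and are independent (so they form a grading); for
`a = 1`, the canonical identification `A ⊗ Matrix (Fin 1) (Fin 1) B ≅ A ⊗ B` is
multiplicative, unital and matches the pieces with those of the usual Segre product.
-/

open TensorProduct

noncomputable section

variable (k : Type) [CommRing k]
variable (A : Type) [Ring A] [Algebra k A] (𝒜 : ℤ → Submodule k A) [GradedRing 𝒜]
variable (B : Type) [Ring B] [Algebra k B] (ℬ : ℤ → Submodule k B) [GradedRing ℬ]

/-- The submodule of `a×a` matrices whose `(p,q)`-entry lies in `S_{i+p−q}`. -/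
def matPiece (a : ℕ) (i : ℤ) : Submodule k (Matrix (Fin a) (Fin a) B) where
  carrier := {m | ∀ p q : Fin a, m p q ∈ ℬ (i + (p : ℤ) - (q : ℤ))}
  add_mem' := fun hm hm' p q => (ℬ _).add_mem (hm p q) (hm' p q)
  zero_mem' := fun p q => (ℬ _).zero_mem
  smul_mem' := fun c m hm p q => (ℬ _).smul_mem c (hm p q)

/-- The degree-`i` piece `R_i ⊗_k M_i` of the `a`-Segre product, as a submodule of
`A ⊗_k Matrix (Fin a) (Fin a) B`. -/
def segrePiece (a : ℕ) (i : ℤ) : Submodule k (A ⊗[k] Matrix (Fin a) (Fin a) B) :=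
  LinearMap.range (TensorProduct.map (𝒜 i).subtype (matPiece k B ℬ a i).subtype)

/-- The canonical identification `Matrix (Fin 1) (Fin 1) B ≅ B`. -/
def matOne : Matrix (Fin 1) (Fin 1) B ≃ₗ[k] B where
  toFun m := m 0 0
  map_add' _ _ := rfl
  map_smul' _ _ := rfl
  invFun b := Matrix.of fun _ _ => b
  left_inv m := by
    ext p q
    fin_cases p <;> fin_cases q <;> rfl
  right_inv b := rfl

/-- The induced identification `A ⊗ Matrix (Fin 1) (Fin 1) B ≅ A ⊗ B`. -/
def collapse : (A ⊗[k] Matrix (Fin 1) (Fin 1) B) ≃ₗ[k] (A ⊗[k] B) :=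
  TensorProduct.congr (LinearEquiv.refl k A) (matOne k B)

/-! ### Auxiliary lemmas -/

set_option synthInstance.maxHeartbeats 400000

lemma segrePiece_eq_span (a : ℕ) (i : ℤ) :
    segrePiece k A 𝒜 B ℬ a i =
      Submodule.span k {t | ∃ r ∈ 𝒜 i, ∃ m ∈ matPiece k B ℬ a i, r ⊗ₜ[k] m = t} := by
  rw [segrePiece, TensorProduct.range_map_eq_span_tmul]
  congr 1
  ext t
  constructor
  · rintro ⟨r, m, rfl⟩; exact ⟨r, r.2, m, m.2, rfl⟩
  · rintro ⟨r, hr, m, hm, rfl⟩; exact ⟨⟨r, hr⟩, ⟨m, hm⟩, rfl⟩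

/-- The degree-`i` projection of `A`, as a `k`-linear map. -/
def projA (i : ℤ) : A →ₗ[k] A :=
  (𝒜 i).subtype ∘ₗ (DirectSum.component k ℤ (fun j => 𝒜 j) i) ∘ₗ
    (DirectSum.decomposeLinearEquiv 𝒜).toLinearMap

lemma projA_apply (i : ℤ) (r : A) : projA k A 𝒜 i r = (DirectSum.decompose 𝒜 r i : A) := rfl

lemma projA_of_mem_same {i : ℤ} {r : A} (hr : r ∈ 𝒜 i) : projA k A 𝒜 i r = r := by
  rw [projA_apply, DirectSum.decompose_of_mem_same 𝒜 hr]

lemma projA_of_mem_ne {i j : ℤ} {r : A} (hr : r ∈ 𝒜 j) (h : j ≠ i) : projA k A 𝒜 i r = 0 := by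
  rw [projA_apply, DirectSum.decompose_of_mem_ne 𝒜 hr h]

/-- The degree-`i` projection of the matrix space, as a `k`-linear map. -/
def projM (a : ℕ) (i : ℤ) :
    Matrix (Fin a) (Fin a) B →ₗ[k] Matrix (Fin a) (Fin a) B where
  toFun m := Matrix.of fun p q => (DirectSum.decompose ℬ (m p q) (i + (p : ℤ) - (q : ℤ)) : B)
  map_add' x y := by
    ext p q
    simp [Matrix.add_apply]
  map_smul' c x := by
    ext p q
    simp [Matrix.smul_apply, DirectSum.decompose_smul, DirectSum.smul_apply]

lemma projM_of_mem_same {a : ℕ} {i : ℤ} {m : Matrix (Fin a) (Fin a) B}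
    (hm : m ∈ matPiece k B ℬ a i) : projM k B ℬ a i m = m := by
  ext p q
  show (DirectSum.decompose ℬ (m p q) (i + (p : ℤ) - (q : ℤ)) : B) = m p q
  exact DirectSum.decompose_of_mem_same ℬ (hm p q)

lemma projM_of_mem_ne {a : ℕ} {i j : ℤ} {m : Matrix (Fin a) (Fin a) B}
    (hm : m ∈ matPiece k B ℬ a j) (h : j ≠ i) : projM k B ℬ a i m = 0 := by
  ext p q
  have hne : j + (p : ℤ) - (q : ℤ) ≠ i + (p : ℤ) - (q : ℤ) := by
    intro hEq; apply h; omega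
  show (DirectSum.decompose ℬ (m p q) (i + (p : ℤ) - (q : ℤ)) : B) =
    (0 : Matrix (Fin a) (Fin a) B) p q
  rw [Matrix.zero_apply]
  exact DirectSum.decompose_of_mem_ne ℬ (hm p q) hne

/-- The degree-`i` projection of the `a`-Segre product. -/
def projSeg (a : ℕ) (i : ℤ) :
    (A ⊗[k] Matrix (Fin a) (Fin a) B) →ₗ[k] (A ⊗[k] Matrix (Fin a) (Fin a) B) :=
  TensorProduct.map (projA k A 𝒜 i) (projM k B ℬ a i)

lemma projSeg_of_mem_same {a : ℕ} {i : ℤ} {x : A ⊗[k] Matrix (Fin a) (Fin a) B}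
    (hx : x ∈ segrePiece k A 𝒜 B ℬ a i) : projSeg k A 𝒜 B ℬ a i x = x := by
  rw [segrePiece_eq_span] at hx
  induction hx using Submodule.span_induction with
  | mem t ht =>
    obtain ⟨r, hr, m, hm, rfl⟩ := ht
    rw [projSeg, TensorProduct.map_tmul, projA_of_mem_same k A 𝒜 hr,
      projM_of_mem_same k B ℬ hm]
  | zero => simp
  | add x y _ _ hx hy => rw [map_add, hx, hy]
  | smul c x _ hx => rw [map_smul, hx]

lemma projSeg_of_mem_ne {a : ℕ} {i j : ℤ} {x : A ⊗[k] Matrix (Fin a) (Fin a) B}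
    (hx : x ∈ segrePiece k A 𝒜 B ℬ a j) (h : j ≠ i) : projSeg k A 𝒜 B ℬ a i x = 0 := by
  rw [segrePiece_eq_span] at hx
  induction hx using Submodule.span_induction with
  | mem t ht =>
    obtain ⟨r, hr, m, hm, rfl⟩ := ht
    rw [projSeg, TensorProduct.map_tmul, projA_of_mem_ne k A 𝒜 hr h, TensorProduct.zero_tmul]
  | zero => simp
  | add x y _ _ hx hy => rw [map_add, hx, hy, add_zero]
  | smul c x _ hx => rw [map_smul, hx, smul_zero]

/-- The `a`-Segre product of ℤ-graded `k`-algebras is an associative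
unital graded `k`-algebra under the natural matrix-and-tensor multiplication, and for
`a = 1` it coincides with the usual Segre product `⨁_i R_i ⊗_k S_i`. -/
theorem aSegre_graded_algebra (a : ℕ) (ha : 1 ≤ a) :
    -- the `a`-Segre product is a unital …
    ((1 : A ⊗[k] Matrix (Fin a) (Fin a) B) ∈ segrePiece k A 𝒜 B ℬ a 0) ∧
    -- … multiplicatively closed (hence, being a subalgebra of the associative algebra
    -- `A ⊗ₖ Matrix B` with the matrix-and-tensor multiplication, associative) …
    (∀ (i j : ℤ) (x y : A ⊗[k] Matrix (Fin a) (Fin a) B),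
      x ∈ segrePiece k A 𝒜 B ℬ a i → y ∈ segrePiece k A 𝒜 B ℬ a j →
        x * y ∈ segrePiece k A 𝒜 B ℬ a (i + j)) ∧
    -- … graded family of pieces:
    (iSupIndep fun i : ℤ => segrePiece k A 𝒜 B ℬ a i) ∧
    -- for `a = 1` it coincides with the usual Segre product:
    (∀ x y : A ⊗[k] Matrix (Fin 1) (Fin 1) B,
      collapse k A B (x * y) = collapse k A B x * collapse k A B y) ∧
    (collapse k A B (1 : A ⊗[k] Matrix (Fin 1) (Fin 1) B) = 1) ∧
    (∀ i : ℤ, Submodule.map (collapse k A B).toLinearMap (segrePiece k A 𝒜 B ℬ 1 i)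
      = LinearMap.range (TensorProduct.map (𝒜 i).subtype (ℬ i).subtype)) := by
  refine ⟨?one, ?mul, ?indep, ?cmul, ?cone, ?cpieces⟩
  case one =>
    have hm : (1 : Matrix (Fin a) (Fin a) B) ∈ matPiece k B ℬ a 0 := by
      intro p q
      by_cases h : p = q
      · subst h
        have hidx : (0 : ℤ) + (p : ℤ) - (p : ℤ) = 0 := by ring
        rw [hidx, Matrix.one_apply_eq]
        exact SetLike.one_mem_graded ℬ
      · rw [Matrix.one_apply_ne h]
        exact (ℬ _).zero_mem
    exact ⟨⟨1, SetLike.one_mem_graded 𝒜⟩ ⊗ₜ ⟨1, hm⟩, by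
      simp [Algebra.TensorProduct.one_def]⟩
  case mul =>
    intro i j x y hx hy
    rw [segrePiece_eq_span] at hx hy ⊢
    have hprod := Submodule.mul_mem_mul hx hy
    rw [Submodule.span_mul_span] at hprod
    refine Submodule.span_le.mpr ?_ hprod
    rintro t ⟨u, hu, v, hv, rfl⟩
    obtain ⟨r, hr, m, hm, rfl⟩ := hu
    obtain ⟨r', hr', m', hm', rfl⟩ := hv
    refine Submodule.subset_span ⟨r * r', SetLike.mul_mem_graded hr hr', m * m', ?_,
      (Algebra.TensorProduct.tmul_mul_tmul r r' m m').symm⟩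
    intro p q
    rw [Matrix.mul_apply]
    refine Submodule.sum_mem _ fun l _ => ?_
    have hidx : i + (p : ℤ) - (l : ℤ) + (j + (l : ℤ) - (q : ℤ)) = i + j + (p : ℤ) - (q : ℤ) := by
      ring
    exact hidx ▸ SetLike.mul_mem_graded (hm p l) (hm' l q)
  case indep =>
    intro i
    rw [Submodule.disjoint_def]
    intro x hxi hxrest
    have h1 : projSeg k A 𝒜 B ℬ a i x = x := projSeg_of_mem_same k A 𝒜 B ℬ hxi
    have h2 : projSeg k A 𝒜 B ℬ a i x = 0 := by
      have hle : (⨆ j, ⨆ (_ : j ≠ i), segrePiece k A 𝒜 B ℬ a j) ≤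
          LinearMap.ker (projSeg k A 𝒜 B ℬ a i) := by
        refine iSup_le fun j => iSup_le fun hj => fun y hy => ?_
        exact projSeg_of_mem_ne k A 𝒜 B ℬ hy hj
      exact hle hxrest
    rw [h1] at h2
    exact h2
  case cmul =>
    intro x y
    induction x using TensorProduct.induction_on with
    | zero => simp
    | tmul r m =>
      induction y using TensorProduct.induction_on with
      | zero => simp
      | tmul r' m' =>
        rw [Algebra.TensorProduct.tmul_mul_tmul]
        show (r * r') ⊗ₜ[k] ((m * m') 0 0) = (r ⊗ₜ[k] (m 0 0)) * (r' ⊗ₜ[k] (m' 0 0))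
        rw [Algebra.TensorProduct.tmul_mul_tmul, Matrix.mul_apply, Fin.sum_univ_one]
      | add y1 y2 h1 h2 => rw [mul_add, map_add, h1, h2, map_add, mul_add]
    | add x1 x2 h1 h2 => rw [add_mul, map_add, h1, h2, map_add, add_mul]
  case cone =>
    rw [Algebra.TensorProduct.one_def]
    show (1 : A) ⊗ₜ[k] ((1 : Matrix (Fin 1) (Fin 1) B) 0 0) = 1
    rw [Matrix.one_apply_eq, Algebra.TensorProduct.one_def]
  case cpieces =>
    intro i
    rw [segrePiece_eq_span, Submodule.map_span, TensorProduct.range_map_eq_span_tmul]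
    congr 1
    ext t
    constructor
    · rintro ⟨u, ⟨r, hr, m, hm, rfl⟩, rfl⟩
      have hm00 : m 0 0 ∈ ℬ i := by simpa using hm 0 0
      exact ⟨⟨r, hr⟩, ⟨m 0 0, hm00⟩, rfl⟩
    · rintro ⟨r, s, rfl⟩
      refine ⟨(r : A) ⊗ₜ[k] (Matrix.of fun _ _ => (s : B)), ⟨r, r.2,
        Matrix.of fun _ _ => (s : B), fun p q => ?_, rfl⟩, rfl⟩
      fin_cases p <;> fin_cases q <;> simpa using s.2

end
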